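/- Let N ≥ 2, ρ > 0, ν ∈ ℝ, and set μ = (N − 2)/2. Let F : ℝ → ℝ be twice continuously differentiable on (−1, 1) and satisfy the associated Legendre equation (1 − x²) F''(x) − 2x F'(x) + (ν(ν+1) − μ²/(1 − x²)) F(x) = 0 for all x ∈ (−1, 1). Then the function g(r) = (ρ/r)^{N/2 − 1} · F((r² − ρ²)/(r² + ρ²)) satisfies the radial fish-eye equation g''(r) + ((N − 1)/r) · g'(r) + (4 ν(ν+1) ρ²/(r² + ρ²)²) · g(r) = 0 for all r > 0. -/

import Mathlib

open Real Set Filter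

set_option maxHeartbeats 2000000 in
private lemma aux_fisheye (ρ ν α : ℝ) (hρ : 0 < ρ)
    (F : ℝ → ℝ) (hF : ContDiffOn ℝ 2 F (Set.Ioo (-1 : ℝ) 1))
    (hLeg : ∀ x ∈ Set.Ioo (-1 : ℝ) 1,
      (1 - x ^ 2) * deriv (deriv F) x - 2 * x * deriv F x
        + (ν * (ν + 1) - α ^ 2 / (1 - x ^ 2)) * F x = 0)
    (r : ℝ) (hr : 0 < r) :
    deriv (deriv (fun t => ρ ^ α * t ^ (-α) * F ((t ^ 2 - ρ ^ 2) / (t ^ 2 + ρ ^ 2)))) r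
      + ((2 * α + 1) / r) * deriv (fun t => ρ ^ α * t ^ (-α) * F ((t ^ 2 - ρ ^ 2) / (t ^ 2 + ρ ^ 2))) r
      + (4 * ν * (ν + 1) * ρ ^ 2 / (r ^ 2 + ρ ^ 2) ^ 2)
        * (ρ ^ α * r ^ (-α) * F ((r ^ 2 - ρ ^ 2) / (r ^ 2 + ρ ^ 2))) = 0 := by
  have hs : ∀ t : ℝ, (0:ℝ) < t ^ 2 + ρ ^ 2 := fun t => by positivity
  have hmem : ∀ t : ℝ, 0 < t → (t ^ 2 - ρ ^ 2) / (t ^ 2 + ρ ^ 2) ∈ Ioo (-1:ℝ) 1 := by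
    intro t ht
    constructor
    · rw [lt_div_iff₀ (hs t)]; nlinarith
    · rw [div_lt_one (hs t)]; nlinarith
  have hXd : ∀ t : ℝ, 0 < t →
      HasDerivAt (fun t => (t ^ 2 - ρ ^ 2) / (t ^ 2 + ρ ^ 2)) (4 * ρ ^ 2 * t / (t ^ 2 + ρ ^ 2) ^ 2) t := by
    intro t ht
    have h1 : HasDerivAt (fun t : ℝ => t ^ 2 - ρ ^ 2) (2 * t) t := by
      simpa using (hasDerivAt_pow 2 t).sub_const (ρ ^ 2)
    have h2 : HasDerivAt (fun t : ℝ => t ^ 2 + ρ ^ 2) (2 * t) t := by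
      simpa using (hasDerivAt_pow 2 t).add_const (ρ ^ 2)
    have := h1.div h2 (hs t).ne'
    refine this.congr_deriv ?_
    congr 1
    ring
  have hF1 : ∀ y ∈ Ioo (-1:ℝ) 1, HasDerivAt F (deriv F y) y := by
    intro y hy
    exact ((hF.contDiffAt (isOpen_Ioo.mem_nhds hy)).differentiableAt (by norm_num)).hasDerivAt
  have hdF : ContDiffOn ℝ 1 (deriv F) (Ioo (-1:ℝ) 1) := by
    have := hF.deriv_of_isOpen isOpen_Ioo (m := 1) (by norm_num)
    exact this
  have hF2 : ∀ y ∈ Ioo (-1:ℝ) 1, HasDerivAt (deriv F) (deriv (deriv F) y) y := by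
    intro y hy
    exact ((hdF.contDiffAt (isOpen_Ioo.mem_nhds hy)).differentiableAt (by norm_num)).hasDerivAt
  have hB : ∀ t : ℝ, 0 < t → HasDerivAt (fun t : ℝ => t ^ (-α)) (-α * t ^ (-α) / t) t := by
    intro t ht
    have h := Real.hasDerivAt_rpow_const (x := t) (p := -α) (Or.inl ht.ne')
    convert h using 1
    rw [show -α - 1 = -α - 1 from rfl, Real.rpow_sub ht, Real.rpow_one]
    ring
  set G : ℝ → ℝ := fun t => ρ ^ α * (-α * t ^ (-α) / t) * F ((t ^ 2 - ρ ^ 2) / (t ^ 2 + ρ ^ 2))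
      + ρ ^ α * t ^ (-α) * (deriv F ((t ^ 2 - ρ ^ 2) / (t ^ 2 + ρ ^ 2)) * (4 * ρ ^ 2 * t / (t ^ 2 + ρ ^ 2) ^ 2)) with hGdef
  have hGd : ∀ t : ℝ, 0 < t →
      HasDerivAt (fun t => ρ ^ α * t ^ (-α) * F ((t ^ 2 - ρ ^ 2) / (t ^ 2 + ρ ^ 2))) (G t) t := by
    intro t ht
    have hu : HasDerivAt (fun t : ℝ => ρ ^ α * t ^ (-α)) (ρ ^ α * (-α * t ^ (-α) / t)) t :=
      (hB t ht).const_mul (ρ ^ α)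
    have hv : HasDerivAt (fun t : ℝ => F ((t ^ 2 - ρ ^ 2) / (t ^ 2 + ρ ^ 2)))
        (deriv F ((t ^ 2 - ρ ^ 2) / (t ^ 2 + ρ ^ 2)) * (4 * ρ ^ 2 * t / (t ^ 2 + ρ ^ 2) ^ 2)) t :=
      (hF1 _ (hmem t ht)).comp t (hXd t ht)
    exact hu.mul hv
  have hEq : ∀ t ∈ Ioi (0:ℝ),
      deriv (fun t => ρ ^ α * t ^ (-α) * F ((t ^ 2 - ρ ^ 2) / (t ^ 2 + ρ ^ 2))) t = G t :=
    fun t ht => (hGd t ht).deriv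
  have hev : deriv (fun t => ρ ^ α * t ^ (-α) * F ((t ^ 2 - ρ ^ 2) / (t ^ 2 + ρ ^ 2))) =ᶠ[nhds r] G := by
    filter_upwards [isOpen_Ioi.mem_nhds hr] with t ht using hEq t ht
  rw [hev.deriv_eq, hEq r hr]
  -- second derivative of G at r
  have a0 : HasDerivAt (fun t : ℝ => -α * t ^ (-α)) (-α * (-α * r ^ (-α) / r)) r :=
    (hB r hr).const_mul (-α)
  have a1 := (a0.div (hasDerivAt_id' r) hr.ne').const_mul (ρ ^ α)
  have hv : HasDerivAt (fun t : ℝ => F ((t ^ 2 - ρ ^ 2) / (t ^ 2 + ρ ^ 2)))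
      (deriv F ((r ^ 2 - ρ ^ 2) / (r ^ 2 + ρ ^ 2)) * (4 * ρ ^ 2 * r / (r ^ 2 + ρ ^ 2) ^ 2)) r :=
    (hF1 _ (hmem r hr)).comp r (hXd r hr)
  have hu : HasDerivAt (fun t : ℝ => ρ ^ α * t ^ (-α)) (ρ ^ α * (-α * r ^ (-α) / r)) r :=
    (hB r hr).const_mul (ρ ^ α)
  have b1 : HasDerivAt (fun t : ℝ => deriv F ((t ^ 2 - ρ ^ 2) / (t ^ 2 + ρ ^ 2)))
      (deriv (deriv F) ((r ^ 2 - ρ ^ 2) / (r ^ 2 + ρ ^ 2)) * (4 * ρ ^ 2 * r / (r ^ 2 + ρ ^ 2) ^ 2)) r :=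
    HasDerivAt.comp (h₂ := deriv F) r (hF2 _ (hmem r hr)) (hXd r hr)
  have bn : HasDerivAt (fun t : ℝ => 4 * ρ ^ 2 * t) (4 * ρ ^ 2 * 1) r :=
    (hasDerivAt_id' r).const_mul (4 * ρ ^ 2)
  have bd : HasDerivAt (fun t : ℝ => (t ^ 2 + ρ ^ 2) ^ 2)
      ((2 : ℕ) * (r ^ 2 + ρ ^ 2) ^ 1 * (2 * r ^ 1)) r := by
    have := ((hasDerivAt_pow 2 r).add_const (ρ ^ 2)).pow 2
    simp at this ⊢; exact this
  have b2 := bn.div bd (by positivity)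
  have hGd2 := (a1.mul hv).add (hu.mul (b1.mul b2))
  have hderiv2 : deriv G r = deriv (fun t => ρ ^ α * (-α * t ^ (-α) / t) * F ((t ^ 2 - ρ ^ 2) / (t ^ 2 + ρ ^ 2))
      + ρ ^ α * t ^ (-α) * (deriv F ((t ^ 2 - ρ ^ 2) / (t ^ 2 + ρ ^ 2)) * (4 * ρ ^ 2 * t / (t ^ 2 + ρ ^ 2) ^ 2))) r := by
    rw [hGdef]
  have hGd2' : HasDerivAt (fun t => ρ ^ α * (-α * t ^ (-α) / t) * F ((t ^ 2 - ρ ^ 2) / (t ^ 2 + ρ ^ 2))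
      + ρ ^ α * t ^ (-α) * (deriv F ((t ^ 2 - ρ ^ 2) / (t ^ 2 + ρ ^ 2)) * (4 * ρ ^ 2 * t / (t ^ 2 + ρ ^ 2) ^ 2))) _ r := hGd2
  rw [hderiv2, hGd2'.deriv, hGdef]
  simp only [Pi.mul_apply, Pi.div_apply]
  have key := hLeg ((r ^ 2 - ρ ^ 2) / (r ^ 2 + ρ ^ 2)) (hmem r hr)
  have h1 : (1:ℝ) - ((r ^ 2 - ρ ^ 2) / (r ^ 2 + ρ ^ 2)) ^ 2 = 4 * ρ ^ 2 * r ^ 2 / (r ^ 2 + ρ ^ 2) ^ 2 := by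
    field_simp
    ring
  rw [h1] at key
  field_simp at key
  field_simp
  linear_combination (ρ ^ α * r ^ (-α)) * key

theorem legendre_substitution_radial_fisheye
    {N : ℕ} (hN : 2 ≤ N) (ρ ν μ : ℝ) (hρ : 0 < ρ)
    (hμ : μ = ((N : ℝ) - 2) / 2)
    (F : ℝ → ℝ) (hF : ContDiffOn ℝ 2 F (Set.Ioo (-1 : ℝ) 1))
    (hLegendre : ∀ x ∈ Set.Ioo (-1 : ℝ) 1,
      (1 - x ^ 2) * deriv (deriv F) x - 2 * x * deriv F x
        + (ν * (ν + 1) - μ ^ 2 / (1 - x ^ 2)) * F x = 0)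
    (g : ℝ → ℝ)
    (hg : g = fun r => (ρ / r) ^ ((N : ℝ) / 2 - 1) * F ((r ^ 2 - ρ ^ 2) / (r ^ 2 + ρ ^ 2))) :
    ∀ r : ℝ, 0 < r →
      deriv (deriv g) r + (((N : ℝ) - 1) / r) * deriv g r
        + (4 * ν * (ν + 1) * ρ ^ 2 / (r ^ 2 + ρ ^ 2) ^ 2) * g r = 0 := by
  intro r hr
  have hexp : (N : ℝ) / 2 - 1 = μ := by rw [hμ]; ring
  have hgh : ∀ t ∈ Ioi (0:ℝ), g t
      = ρ ^ μ * t ^ (-μ) * F ((t ^ 2 - ρ ^ 2) / (t ^ 2 + ρ ^ 2)) := by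
    intro t ht
    rw [hg]
    simp only
    rw [hexp, Real.div_rpow hρ.le (le_of_lt ht), Real.rpow_neg (le_of_lt ht), div_eq_mul_inv]
  have e0 : ∀ t ∈ Ioi (0:ℝ), deriv g t
      = deriv (fun t => ρ ^ μ * t ^ (-μ) * F ((t ^ 2 - ρ ^ 2) / (t ^ 2 + ρ ^ 2))) t := by
    intro t ht
    apply Filter.EventuallyEq.deriv_eq
    filter_upwards [isOpen_Ioi.mem_nhds ht] with u hu using hgh u hu
  have e2 : deriv (deriv g) r
      = deriv (deriv (fun t => ρ ^ μ * t ^ (-μ) * F ((t ^ 2 - ρ ^ 2) / (t ^ 2 + ρ ^ 2)))) r := by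
    apply Filter.EventuallyEq.deriv_eq
    filter_upwards [isOpen_Ioi.mem_nhds hr] with u hu using e0 u hu
  have hN1 : (N : ℝ) - 1 = 2 * μ + 1 := by rw [hμ]; ring
  rw [e2, e0 r hr, hgh r hr, hN1]
  exact aux_fisheye ρ ν μ hρ F hF hLegendre r hr
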